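/- Let f : R^n → R, let Q ⊆ R^n be convex closed, and suppose ψ(·, x) is a convex function with ψ(x, x) = 0 satisfying the (δ, L)-model inequalities (with μ = 0): f(x) + ψ(y, x) − δ₁ ≤ f(y) ≤ f(x) + ψ(y, x) + (L/2)‖y − x‖² + δ₂ for all x, y ∈ Q. If x_{k+1} = argmin_{x ∈ Q} [ψ(x, x_k) + (L/2)‖x − x_k‖²], then for all x ∈ Q: f(x_{k+1}) ≤ f(x) + (L/2)‖x − x_k‖² − (L/2)‖x − x_{k+1}‖² + δ₁ + δ₂. -/

import Mathlib

open scoped RealInnerProductSpace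

lemma combo_norm_sq {E : Type*} [NormedAddCommGroup E] [InnerProductSpace ℝ E]
    (a b : E) (t : ℝ) :
    ‖(1 - t) • a + t • b‖ ^ 2
      = (1 - t) * ‖a‖ ^ 2 + t * ‖b‖ ^ 2 - t * (1 - t) * ‖a - b‖ ^ 2 := by
  rw [← real_inner_self_eq_norm_sq ((1 - t) • a + t • b), ← real_inner_self_eq_norm_sq a,
      ← real_inner_self_eq_norm_sq b, ← real_inner_self_eq_norm_sq (a - b)]
  simp only [inner_add_add_self, inner_sub_sub_self, real_inner_smul_left,
    real_inner_smul_right, real_inner_comm a b]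
  ring

theorem gm_one_step (n : ℕ) (f : EuclideanSpace ℝ (Fin n) → ℝ)
    (Q : Set (EuclideanSpace ℝ (Fin n))) (hQconv : Convex ℝ Q) (hQclosed : IsClosed Q)
    (ψ : EuclideanSpace ℝ (Fin n) → EuclideanSpace ℝ (Fin n) → ℝ)
    (δ₁ δ₂ L : ℝ) (hL : 0 < L)
    (hψconv : ∀ x ∈ Q, ConvexOn ℝ Q (fun y => ψ y x))
    (hψ0 : ∀ x ∈ Q, ψ x x = 0)
    (hlow : ∀ x ∈ Q, ∀ y ∈ Q, f x + ψ y x - δ₁ ≤ f y)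
    (hup : ∀ x ∈ Q, ∀ y ∈ Q, f y ≤ f x + ψ y x + (L / 2) * ‖y - x‖ ^ 2 + δ₂)
    (xk xk1 : EuclideanSpace ℝ (Fin n)) (hxk : xk ∈ Q) (hxk1 : xk1 ∈ Q)
    (hargmin : ∀ x ∈ Q,
      ψ xk1 xk + (L / 2) * ‖xk1 - xk‖ ^ 2 ≤ ψ x xk + (L / 2) * ‖x - xk‖ ^ 2) :
    ∀ x ∈ Q,
      f xk1 ≤ f x + (L / 2) * ‖x - xk‖ ^ 2 - (L / 2) * ‖x - xk1‖ ^ 2 + δ₁ + δ₂ := by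
  intro x hx
  -- three-point inequality
  have key : ψ xk1 xk + (L / 2) * ‖xk1 - xk‖ ^ 2
      ≤ ψ x xk + (L / 2) * ‖x - xk‖ ^ 2 - (L / 2) * ‖x - xk1‖ ^ 2 := by
    have step : ∀ t : ℝ, 0 < t → t ≤ 1 →
        ψ xk1 xk + (L / 2) * ‖xk1 - xk‖ ^ 2
          ≤ ψ x xk + (L / 2) * ‖x - xk‖ ^ 2 - (L / 2) * ‖x - xk1‖ ^ 2
            + (L / 2) * t * ‖x - xk1‖ ^ 2 := by
      intro t ht0 ht1
      set y : EuclideanSpace ℝ (Fin n) := (1 - t) • xk1 + t • x with hy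
      have hyQ : y ∈ Q := hQconv hxk1 hx (by linarith) (le_of_lt ht0) (by ring)
      have hmin := hargmin y hyQ
      have hconv := (hψconv xk hxk).2 hxk1 hx (by linarith : (0:ℝ) ≤ 1 - t)
        (le_of_lt ht0) (by ring)
      have hnorm : ‖y - xk‖ ^ 2
          = (1 - t) * ‖xk1 - xk‖ ^ 2 + t * ‖x - xk‖ ^ 2
            - t * (1 - t) * ‖x - xk1‖ ^ 2 := by
        have hydiff : y - xk = (1 - t) • (xk1 - xk) + t • (x - xk) := by
          rw [hy]; module
        rw [hydiff, combo_norm_sq]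
        have : ‖xk1 - xk - (x - xk)‖ = ‖x - xk1‖ := by
          rw [← norm_neg]; congr 1; abel
        rw [this]
      rw [hnorm] at hmin
      rw [← hy] at hconv
      simp only [smul_eq_mul] at hconv
      nlinarith [hconv, hmin, sq_nonneg ‖x - xk1‖, ht0]
    by_contra hcon
    push_neg at hcon
    set c := ‖x - xk1‖ ^ 2 with hc
    have hc0 : 0 ≤ c := sq_nonneg _
    set ε := ψ xk1 xk + (L / 2) * ‖xk1 - xk‖ ^ 2
        - (ψ x xk + (L / 2) * ‖x - xk‖ ^ 2 - (L / 2) * c) with hε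
    have hε0 : 0 < ε := by rw [hε]; linarith
    have hdpos : 0 < (L / 2) * c + ε := by positivity
    set t := min 1 (ε / ((L / 2) * c + ε)) with ht
    have ht0 : 0 < t := lt_min one_pos (div_pos hε0 hdpos)
    have ht1 : t ≤ 1 := min_le_left _ _
    have h := step t ht0 ht1
    have hbound : (L / 2) * t * c < ε := by
      have h2 : t ≤ ε / ((L / 2) * c + ε) := min_le_right _ _
      have : (L / 2) * t * c ≤ (L / 2) * (ε / ((L / 2) * c + ε)) * c := by
        have := mul_le_mul_of_nonneg_left h2 (le_of_lt (half_pos hL))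
        nlinarith
      have hfrac : (L / 2) * c / ((L / 2) * c + ε) < 1 :=
        (div_lt_one hdpos).mpr (by linarith)
      have heq : (L / 2) * (ε / ((L / 2) * c + ε)) * c
          = ε * ((L / 2) * c / ((L / 2) * c + ε)) := by
        field_simp
      have hlt : (L / 2) * (ε / ((L / 2) * c + ε)) * c < ε := by
        rw [heq]; nlinarith
      linarith
    rw [hε] at hbound
    linarith
  have h1 := hup xk hxk xk1 hxk1
  have h2 := hlow xk hxk x hx
  linarith
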